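/- arXiv:0711.3057 — 3 statements merged into one kernel-verified Lean document; each statement's English description precedes it below -/
import Mathlib

section
/- Let A = (a_1, …, a_k) be a nonempty multiset of integers with each a_i ≥ 2 such that c(A) = Σ_i (a_i − 1) is odd (so that elements of C(A) are odd permutations). Let T be a subset of the extended conjugacy class C(A) in S_n that is semi-connected ({1, …, n} is a single orbit under ⟨T⟩), split (the supports of any two distinct elements of T intersect in at most one point), and balanced. Then T generates S_n. -/
open Equiv Equiv.Perm

section Cyc3Aux

variable {α : Type*} [DecidableEq α]

/-- The 3-cycle sending `a ↦ b ↦ c ↦ a`. -/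
private def cyc3 (a b c : α) : Equiv.Perm α := Equiv.swap a c * Equiv.swap a b

private lemma cyc3_xa {a b c : α} (hba : b ≠ a) (hbc : b ≠ c) : cyc3 a b c a = b := by
  simp [cyc3, Equiv.swap_apply_of_ne_of_ne hba hbc]

private lemma cyc3_xb (a b c : α) : cyc3 a b c b = c := by
  by_cases h : b = a
  · subst h; by_cases h2 : b = c <;> simp [cyc3, Equiv.swap_apply_of_ne_of_ne, h2]
  · simp [cyc3, Equiv.swap_apply_of_ne_of_ne, h]

private lemma cyc3_xc {a b c : α} (hca : c ≠ a) (hcb : c ≠ b) : cyc3 a b c c = a := by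
  simp [cyc3, Equiv.swap_apply_of_ne_of_ne hca hcb]

private lemma cyc3_other {a b c y : α} (hya : y ≠ a) (hyb : y ≠ b) (hyc : y ≠ c) :
    cyc3 a b c y = y := by
  simp [cyc3, Equiv.swap_apply_of_ne_of_ne hya hyb, Equiv.swap_apply_of_ne_of_ne hya hyc]

private lemma cyc3_moved {a b c y : α} (h : cyc3 a b c y ≠ y) : y = a ∨ y = b ∨ y = c := by
  by_contra hcon
  push_neg at hcon
  exact h (cyc3_other hcon.1 hcon.2.1 hcon.2.2)

private lemma cyc3_rot {a b c : α} (hab : a ≠ b) (hac : a ≠ c) (hbc : b ≠ c) :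
    cyc3 a b c = cyc3 b c a := by
  ext y
  simp only [cyc3, Equiv.Perm.mul_apply, Equiv.swap_apply_def]
  split_ifs <;> grind

private lemma cyc3_inv {a b c : α} (hab : a ≠ b) (hac : a ≠ c) (hbc : b ≠ c) :
    (cyc3 a b c)⁻¹ = cyc3 a c b := by
  rw [eq_comm, eq_inv_iff_mul_eq_one]
  ext y
  simp only [cyc3, Equiv.Perm.mul_apply, Equiv.swap_apply_def, Equiv.Perm.one_apply]
  split_ifs <;> grind

private lemma cyc3_decomp {x u v w : α} (hxu : x ≠ u) (hxv : x ≠ v) (hxw : x ≠ w)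
    (huv : u ≠ v) (huw : u ≠ w) (hvw : v ≠ w) :
    cyc3 u v w = cyc3 x u v * cyc3 x v w := by
  ext y
  by_cases hy0 : y = x
  · subst hy0; simp only [cyc3, Equiv.Perm.mul_apply, Equiv.swap_apply_def]
    split_ifs <;> grind
  by_cases hy1 : y = u
  · subst hy1; simp only [cyc3, Equiv.Perm.mul_apply, Equiv.swap_apply_def]
    split_ifs <;> grind
  by_cases hy2 : y = v
  · subst hy2; simp only [cyc3, Equiv.Perm.mul_apply, Equiv.swap_apply_def]
    split_ifs <;> grind
  by_cases hy3 : y = w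
  · subst hy3; simp only [cyc3, Equiv.Perm.mul_apply, Equiv.swap_apply_def]
    split_ifs <;> grind
  · simp only [cyc3, Equiv.Perm.mul_apply, Equiv.swap_apply_def]
    split_ifs <;> grind

private lemma cyc3_decomp' {x a b g : α} (hxa : x ≠ a) (hxb : x ≠ b) (hxg : x ≠ g)
    (hab : a ≠ b) (hag : a ≠ g) (hbg : b ≠ g) :
    cyc3 x a b = cyc3 x g b * cyc3 x a g := by
  ext y
  by_cases hy0 : y = x
  · subst hy0; simp only [cyc3, Equiv.Perm.mul_apply, Equiv.swap_apply_def]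
    split_ifs <;> grind
  by_cases hy1 : y = a
  · subst hy1; simp only [cyc3, Equiv.Perm.mul_apply, Equiv.swap_apply_def]
    split_ifs <;> grind
  by_cases hy2 : y = b
  · subst hy2; simp only [cyc3, Equiv.Perm.mul_apply, Equiv.swap_apply_def]
    split_ifs <;> grind
  by_cases hy3 : y = g
  · subst hy3; simp only [cyc3, Equiv.Perm.mul_apply, Equiv.swap_apply_def]
    split_ifs <;> grind
  · simp only [cyc3, Equiv.Perm.mul_apply, Equiv.swap_apply_def]
    split_ifs <;> grind

private lemma cyc3_conj (f : Equiv.Perm α) (a b c : α) :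
    f * cyc3 a b c * f⁻¹ = cyc3 (f a) (f b) (f c) := by
  simp only [cyc3, Equiv.swap_apply_apply]
  group

private lemma moved_ne {g h : Equiv.Perm α} {x : α} (hgx : g x ≠ x) (hhx : h x ≠ x)
    (hd : ∀ y, g y ≠ y → h y ≠ y → y = x) : g x ≠ h x := by
  intro hc
  have h1 : g (h x) = h x := by
    by_contra hc2
    exact hhx (hd _ hc2 (fun hc3 => hhx (h.injective hc3)))
  have h2 : g (g x) ≠ g x := fun hc2 => hgx (g.injective hc2)
  rw [hc, h1] at h2
  exact h2 rfl

private lemma commutator_eq_cyc3 (g h : Equiv.Perm α) (x : α)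
    (hgx : g x ≠ x) (hhx : h x ≠ x)
    (hd : ∀ y, g y ≠ y → h y ≠ y → y = x) :
    g * h * g⁻¹ * h⁻¹ = cyc3 x (g x) (h x) := by
  have hmovg : ∀ y, g y ≠ y → g (g y) ≠ g y := fun y hy hc => hy (g.injective hc)
  have hmovh : ∀ y, h y ≠ y → h (h y) ≠ h y := fun y hy hc => hy (h.injective hc)
  have hghx : g (h x) = h x := by
    by_contra hc; exact hhx (hd _ hc (hmovh x hhx))
  have hhgx : h (g x) = g x := by
    by_contra hc; exact hgx (hd _ (hmovg x hgx) hc)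
  have hgh : g x ≠ h x := by
    intro hc
    exact hmovg x hgx (by rw [hc, hghx])
  have key : g * h = cyc3 x (g x) (h x) * (h * g) := by
    ext y
    simp only [Equiv.Perm.mul_apply]
    by_cases hy0 : y = x
    · subst hy0
      rw [hghx, hhgx, cyc3_xb]
    by_cases hgy : g y = y
    · by_cases hhy : h y = y
      · rw [hgy, hhy, hgy, cyc3_other hy0 (fun hc => hmovg x hgx (by rw [← hc, hgy, hc]))
          (fun hc => hmovh x hhx (by rw [← hc, hhy, hc]))]
      · by_cases hhyx : h y = x
        · rw [hgy, hhyx, cyc3_xa hgx hgh]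
        · have hgf : g (h y) = h y := by
            by_contra hc; exact hhyx (hd _ hc (hmovh y hhy))
          rw [hgy, hgf]
          rw [cyc3_other hhyx (fun hc => hmovh y hhy (by rw [hc, hhgx]))
            (fun hc => hy0 (h.injective hc))]
    · have hhy : h y = y := by
        by_contra hc; exact hy0 (hd _ hgy hc)
      rw [hhy]
      by_cases hgyx : g y = x
      · rw [hgyx, cyc3_xc hhx (Ne.symm hgh)]
      · have hhf : h (g y) = g y := by
          by_contra hc; exact hgyx (hd _ (hmovg y hgy) hc)
        rw [hhf]
        rw [cyc3_other hgyx (fun hc => hy0 (g.injective hc))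
          (fun hc => hmovg y hgy (by rw [hc, hghx]))]
  calc g * h * g⁻¹ * h⁻¹ = (g * h) * (h * g)⁻¹ := by group
    _ = (cyc3 x (g x) (h x) * (h * g)) * (h * g)⁻¹ := by rw [← key]
    _ = cyc3 x (g x) (h x) := by group

private lemma isThreeCycle_eq_cyc3 [Fintype α] {σ : Equiv.Perm α} (hσ : σ.IsThreeCycle) :
    ∃ a b c : α, a ≠ b ∧ a ≠ c ∧ b ≠ c ∧ σ = cyc3 a b c := by
  have hcard : σ.support.card = 3 := hσ.card_support
  have hne : σ.support.Nonempty := Finset.card_pos.mp (by omega)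
  obtain ⟨a, ha⟩ := hne
  have ha' : σ a ≠ a := Equiv.Perm.mem_support.mp ha
  have h3 : σ ^ 3 = 1 := by
    rw [← hσ.orderOf]; exact pow_orderOf_eq_one σ
  have h3a : σ (σ (σ a)) = a := by
    have := Equiv.ext_iff.mp h3 a
    simpa [pow_succ, Equiv.Perm.mul_apply] using this
  have hab : a ≠ σ a := fun hc => ha' hc.symm
  have hbc : σ a ≠ σ (σ a) := fun hc => ha' (σ.injective hc).symm
  have hac : a ≠ σ (σ a) := by
    intro hc
    apply ha'
    conv_lhs => rw [hc]
    rw [h3a]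
  have hsub : ({a, σ a, σ (σ a)} : Finset α) ⊆ σ.support := by
    intro y hy
    simp only [Finset.mem_insert, Finset.mem_singleton] at hy
    rcases hy with rfl | rfl | rfl
    · exact ha
    · exact Equiv.Perm.apply_mem_support.mpr ha
    · exact Equiv.Perm.apply_mem_support.mpr (Equiv.Perm.apply_mem_support.mpr ha)
  have hcard3 : ({a, σ a, σ (σ a)} : Finset α).card = 3 := by
    rw [Finset.card_insert_of_notMem (by simp [hab, hac]),
      Finset.card_insert_of_notMem (by simp [hbc]), Finset.card_singleton]
  have hsupp : σ.support = {a, σ a, σ (σ a)} :=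
    (Finset.eq_of_subset_of_card_le hsub (by omega)).symm
  refine ⟨a, σ a, σ (σ a), hab, hac, hbc, ?_⟩
  ext y
  by_cases hy1 : y = a
  · subst hy1; rw [cyc3_xa (Ne.symm hab) hbc]
  by_cases hy2 : y = σ a
  · subst hy2; rw [cyc3_xb]
  by_cases hy3 : y = σ (σ a)
  · subst hy3; rw [cyc3_xc (Ne.symm hac) (Ne.symm hbc), h3a]
  · rw [cyc3_other hy1 hy2 hy3]
    by_contra hc
    have : y ∈ σ.support := Equiv.Perm.mem_support.mpr hc
    rw [hsupp] at this
    simp only [Finset.mem_insert, Finset.mem_singleton] at this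
    tauto

/-- A finset `B` is good for `G` if `G` contains every 3-cycle supported in `B`. -/
private def Good (G : Subgroup (Equiv.Perm α)) (B : Finset α) : Prop :=
  ∀ a b c : α, a ∈ B → b ∈ B → c ∈ B → a ≠ b → a ≠ c → b ≠ c → cyc3 a b c ∈ G

private lemma good_triple {G : Subgroup (Equiv.Perm α)} {p q r : α}
    (hpq : p ≠ q) (hpr : p ≠ r) (hqr : q ≠ r) (hmem : cyc3 p q r ∈ G) :
    Good G ({p, q, r} : Finset α) := by
  have h1 : cyc3 p q r ∈ G := hmem
  have h2 : cyc3 q r p ∈ G := by rw [← cyc3_rot hpq hpr hqr]; exact h1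
  have h3 : cyc3 r p q ∈ G := by rw [← cyc3_rot hqr hpq.symm hpr.symm]; exact h2
  have h4 : cyc3 p r q ∈ G := by rw [← cyc3_inv hpq hpr hqr]; exact G.inv_mem h1
  have h5 : cyc3 r q p ∈ G := by rw [← cyc3_rot hpr hpq (Ne.symm hqr)]; exact h4
  have h6 : cyc3 q p r ∈ G := by rw [← cyc3_rot hqr.symm hpr.symm hpq.symm]; exact h5
  intro a b c ha hb hc hab hac hbc
  simp only [Finset.mem_insert, Finset.mem_singleton] at ha hb hc
  rcases ha with rfl | rfl | rfl <;> rcases hb with rfl | rfl | rfl <;>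
    rcases hc with rfl | rfl | rfl <;>
    first
    | exact absurd rfl hab
    | exact absurd rfl hac
    | exact absurd rfl hbc
    | exact h1 | exact h2 | exact h3 | exact h4 | exact h5 | exact h6

private lemma good_image {G : Subgroup (Equiv.Perm α)} {B : Finset α} {γ : Equiv.Perm α}
    (hγ : γ ∈ G) (hB : Good G B) : Good G (B.image γ) := by
  intro a b c ha hb hc hab hac hbc
  simp only [Finset.mem_image] at ha hb hc
  obtain ⟨a', ha', rfl⟩ := ha
  obtain ⟨b', hb', rfl⟩ := hb
  obtain ⟨c', hc', rfl⟩ := hc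
  rw [← cyc3_conj]
  exact G.mul_mem (G.mul_mem hγ (hB a' b' c' ha' hb' hc'
    (fun hc => hab (congrArg γ hc)) (fun hc => hac (congrArg γ hc))
    (fun hc => hbc (congrArg γ hc)))) (G.inv_mem hγ)

private lemma good_aux {G : Subgroup (Equiv.Perm α)} {B1 B2 : Finset α} {x : α}
    (hx1 : x ∈ B1) (hx2 : x ∈ B2) (h1 : Good G B1) (h2 : Good G B2)
    (hc1 : 3 ≤ B1.card) (hc2 : 3 ≤ B2.card) :
    ∀ a b : α, a ∈ B1 → a ∉ B2 → b ∈ B2 → b ∉ B1 → a ≠ x → b ≠ x → a ≠ b →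
      cyc3 x a b ∈ G := by
  intro a b ha ha2 hb hb1 hax hbx hab
  have hγex : ((B1.erase x).erase a).Nonempty := by
    rw [← Finset.card_pos]
    have := Finset.pred_card_le_card_erase (a := a) (s := B1.erase x)
    have h' := Finset.pred_card_le_card_erase (a := x) (s := B1)
    omega
  obtain ⟨γ, hγ⟩ := hγex
  have hγa : γ ≠ a := (Finset.mem_erase.mp hγ).1
  have hγx : γ ≠ x := (Finset.mem_erase.mp (Finset.mem_erase.mp hγ).2).1
  have hγ1 : γ ∈ B1 := (Finset.mem_erase.mp (Finset.mem_erase.mp hγ).2).2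
  have hγb : γ ≠ b := fun hc => hb1 (hc ▸ hγ1)
  have hm1 : cyc3 x a γ ∈ G := h1 x a γ hx1 ha hγ1 hax.symm hγx.symm hγa.symm
  by_cases hδ : ∃ δ ∈ B2, δ ≠ x ∧ δ ≠ b ∧ δ ≠ γ
  · obtain ⟨δ, hδ2, hδx, hδb, hδγ⟩ := hδ
    have hδa : δ ≠ a := fun hc => ha2 (hc ▸ hδ2)
    have hm2 : cyc3 x b δ ∈ G := h2 x b δ hx2 hb hδ2 hbx.symm hδx.symm hδb.symm
    have hcomm := commutator_eq_cyc3 (cyc3 x a γ) (cyc3 x b δ) x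
      (by rw [cyc3_xa hax hγa.symm]; exact hax)
      (by rw [cyc3_xa hbx hδb.symm]; exact hbx)
      (by
        intro y hy1 hy2
        rcases cyc3_moved hy1 with rfl | rfl | rfl
        · rfl
        · rcases cyc3_moved hy2 with rfl | rfl | rfl
          · rfl
          · exact absurd rfl hab
          · exact absurd rfl hδa.symm
        · rcases cyc3_moved hy2 with rfl | rfl | rfl
          · rfl
          · exact absurd rfl hγb
          · exact absurd rfl hδγ.symm)
    rw [cyc3_xa hax hγa.symm, cyc3_xa hbx hδb.symm] at hcomm
    rw [← hcomm]
    exact G.mul_mem (G.mul_mem (G.mul_mem hm1 hm2) (G.inv_mem hm1)) (G.inv_mem hm2)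
  · push_neg at hδ
    have hsub : B2 ⊆ ({x, b, γ} : Finset α) := by
      intro y hy
      simp only [Finset.mem_insert, Finset.mem_singleton]
      by_contra hcon
      push_neg at hcon
      exact hcon.2.2 (hδ y hy hcon.1 hcon.2.1)
    have hcard : ({x, b, γ} : Finset α).card ≤ 3 := by
      apply le_trans (Finset.card_insert_le _ _)
      have := Finset.card_insert_le b ({γ} : Finset α)
      simp only [Finset.card_singleton] at this ⊢
      omega
    have hB2 : B2 = {x, b, γ} :=
      Finset.eq_of_subset_of_card_le hsub (le_trans hcard hc2)
    have hγ2 : γ ∈ B2 := by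
      rw [hB2]
      simp only [Finset.mem_insert, Finset.mem_singleton]
      tauto
    have hm2 : cyc3 x γ b ∈ G := h2 x γ b hx2 hγ2 hb hγx.symm hbx.symm hγb
    rw [cyc3_decomp' hax.symm hbx.symm hγx.symm hab hγa.symm hγb.symm]
    exact G.mul_mem hm2 hm1

private lemma good_union {G : Subgroup (Equiv.Perm α)} {B1 B2 : Finset α} {x : α}
    (hx1 : x ∈ B1) (hx2 : x ∈ B2) (h1 : Good G B1) (h2 : Good G B2)
    (hc1 : 3 ≤ B1.card) (hc2 : 3 ≤ B2.card) : Good G (B1 ∪ B2) := by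
  have aux : ∀ a b : α, a ∈ B1 ∪ B2 → b ∈ B1 ∪ B2 → a ≠ x → b ≠ x → a ≠ b →
      cyc3 x a b ∈ G := by
    intro a b ha hb hax hbx hab
    rw [Finset.mem_union] at ha hb
    by_cases ha1 : a ∈ B1 <;> by_cases ha2 : a ∈ B2 <;>
      by_cases hb1 : b ∈ B1 <;> by_cases hb2 : b ∈ B2
    all_goals first
    | exact h1 x a b hx1 ha1 hb1 hax.symm hbx.symm hab
    | exact h2 x a b hx2 ha2 hb2 hax.symm hbx.symm hab
    | exact good_aux hx1 hx2 h1 h2 hc1 hc2 a b ha1 ha2 hb2 hb1 hax hbx hab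
    | (rw [← cyc3_inv hbx.symm hax.symm hab.symm]
       exact G.inv_mem (good_aux hx1 hx2 h1 h2 hc1 hc2 b a hb1 hb2 ha2 ha1 hbx hax hab.symm))
    | tauto
  intro a b c ha hb hc hab hac hbc
  by_cases hax : a = x
  · subst hax
    exact aux b c hb hc (Ne.symm hab) (Ne.symm hac) hbc
  by_cases hbx : b = x
  · subst hbx
    rw [cyc3_rot hab hac hbc]
    exact aux c a hc ha (Ne.symm hbc) hax hac.symm
  by_cases hcx : c = x
  · subst hcx
    rw [cyc3_rot hab hac hbc, cyc3_rot hbc hab.symm hac.symm]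
    exact aux a b ha hb hax hbx hab
  · rw [cyc3_decomp (Ne.symm hax) (Ne.symm hbx) (Ne.symm hcx) hab hac hbc]
    exact G.mul_mem (aux a b ha hb hax hbx hab) (aux b c hb hc hbx hcx hbc)

/-- If a good set of size ≥ 3 is a "block" for `G`, then any 3-cycle of `G`
moving a point of the block keeps it in the block. -/
private lemma block_lemma {G : Subgroup (Equiv.Perm α)} {Δ : Finset α}
    (hΔ : 3 ≤ Δ.card)
    (hblock : ∀ γ : Equiv.Perm α, γ ∈ G → Δ.image γ = Δ ∨ Disjoint (Δ.image γ) Δ)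
    {a b c u : α} (hab : a ≠ b) (hac : a ≠ c) (hbc : b ≠ c)
    (hσ : cyc3 a b c ∈ G) (hu : u ∈ Δ) (humem : u = a ∨ u = b ∨ u = c) :
    cyc3 a b c u ∈ Δ := by
  rcases hblock _ hσ with heq | hdis
  · rw [← heq]
    exact Finset.mem_image_of_mem _ hu
  · exfalso
    have hsub : Δ ⊆ ({a, b, c} : Finset α) := by
      intro v hv
      simp only [Finset.mem_insert, Finset.mem_singleton]
      by_contra hcon
      push_neg at hcon
      have hfv : cyc3 a b c v = v := cyc3_other hcon.1 hcon.2.1 hcon.2.2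
      exact Finset.disjoint_left.mp hdis
        (Finset.mem_image.mpr ⟨v, hv, hfv⟩) hv
    have hΔeq : Δ = ({a, b, c} : Finset α) := by
      apply Finset.eq_of_subset_of_card_le hsub
      calc ({a, b, c} : Finset α).card ≤ 3 := by
            apply le_trans (Finset.card_insert_le _ _)
            have := Finset.card_insert_le b ({c} : Finset α)
            simp only [Finset.card_singleton] at this ⊢
            omega
        _ ≤ Δ.card := hΔ
    -- now the image of u under the cycle is in Δ ∩ image, contradiction
    have humem' : cyc3 a b c u ∈ Δ := by
      rw [hΔeq]
      simp only [Finset.mem_insert, Finset.mem_singleton]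
      rcases humem with rfl | rfl | rfl
      · rw [cyc3_xa hab.symm hbc]; tauto
      · rw [cyc3_xb]; tauto
      · rw [cyc3_xc hac.symm hbc.symm]; tauto
    exact Finset.disjoint_left.mp hdis
      (Finset.mem_image.mpr ⟨u, hu, rfl⟩) humem'

end Cyc3Aux

/-- Let `A` be a nonempty multiset of integers `≥ 2` with
`c(A) = Σ (a_i − 1)` odd. Any subset `T` of the extended conjugacy class `C(A)`
in `S_n` that is semi-connected, split, and balanced generates `S_n`.
The orbits of an element `g` of `C(A)` are the supports of its disjoint cycles,
here realized as the sets `(g.cycleOf x).support` for `x` moved by `g`;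
balanced means the collection of all orbits of elements of `T` can be split
into `|A|` pairwise disjoint sets, within each of which all orbits have the
same size and each orbit meets at least one other orbit. -/
theorem stmt_11 (n : ℕ) (A : Multiset ℕ) (hA : A ≠ 0) (hA2 : ∀ a ∈ A, 2 ≤ a)
    (hodd : Odd (A.sum - Multiset.card A))
    (T : Set (Equiv.Perm (Fin n)))
    (htype : ∀ g ∈ T, g.cycleType = A)
    (hconn : ∀ x y : Fin n, ∃ g ∈ Subgroup.closure T, g x = y)
    (hsplit : ∀ g ∈ T, ∀ h ∈ T, g ≠ h → (g.support ∩ h.support).card ≤ 1)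
    (hbalanced : ∃ P : Fin (Multiset.card A) → Set (Finset (Fin n)),
      (∀ i j, i ≠ j → Disjoint (P i) (P j)) ∧
      (⋃ i, P i) = {O : Finset (Fin n) | ∃ g ∈ T, ∃ x : Fin n,
          g x ≠ x ∧ O = (g.cycleOf x).support} ∧
      (∀ i, ∃ s : ℕ, ∀ O ∈ P i, O.card = s) ∧
      (∀ i, ∀ O ∈ P i, ∃ O' ∈ P i, O' ≠ O ∧ (O ∩ O').Nonempty)) :
    Subgroup.closure T = (⊤ : Subgroup (Equiv.Perm (Fin n))) := by
  classical
  set G := Subgroup.closure T with hG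
  by_cases hT : T.Nonempty
  case neg =>
    -- T is empty: the group of permutations is trivial
    have hTe : T = ∅ := Set.not_nonempty_iff_eq_empty.mp hT
    have hfix : ∀ x y : Fin n, x = y := by
      intro x y
      obtain ⟨g, hgmem, hgx⟩ := hconn x y
      rw [hG, hTe, Subgroup.closure_empty, Subgroup.mem_bot] at hgmem
      rw [hgmem] at hgx
      simpa using hgx
    rw [eq_top_iff]
    intro σ _
    have hσ1 : σ = 1 := Equiv.ext fun z => (hfix (σ z) z)
    rw [hσ1]
    exact G.one_mem
  case pos =>
  obtain ⟨g0, hg0⟩ := hT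
  have hTG : T ⊆ G := Subgroup.subset_closure
  -- every element of T moves some point
  have hmove : ∀ g ∈ T, ∃ u : Fin n, g u ≠ u := by
    intro g hg
    by_contra hcon
    push_neg at hcon
    have hg1 : g = 1 := Equiv.ext fun z => by simpa using hcon z
    have := htype g hg
    rw [hg1, Equiv.Perm.cycleType_one] at this
    exact hA this.symm
  -- the `partner` construction coming from balancedness and splitness
  have partner : ∀ g ∈ T, ∀ u : Fin n, g u ≠ u → ∃ h ∈ T, ∃ w : Fin n,
      g.SameCycle u w ∧ g w ≠ w ∧ h w ≠ w ∧ (∀ y, g y ≠ y → h y ≠ y → y = w) := by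
    intro g hg u hu
    obtain ⟨P, hPdisj, hPcover, hPsize, hPpart⟩ := hbalanced
    have hO : (g.cycleOf u).support ∈ ⋃ i, P i := by
      rw [hPcover]; exact ⟨g, hg, u, hu, rfl⟩
    obtain ⟨i, hOi⟩ := Set.mem_iUnion.mp hO
    obtain ⟨O', hO'i, hO'ne, hO'meet⟩ := hPpart i _ hOi
    have hO' : O' ∈ ⋃ i, P i := Set.mem_iUnion.mpr ⟨i, hO'i⟩
    rw [hPcover] at hO'
    obtain ⟨h, hh, y0, hy0, hO'eq⟩ := hO'
    obtain ⟨w, hw⟩ := hO'meet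
    rw [Finset.mem_inter] at hw
    have hwO : w ∈ (g.cycleOf u).support := hw.1
    have hwO' : w ∈ (h.cycleOf y0).support := by rw [← hO'eq]; exact hw.2
    have hsame : g.SameCycle u w := (Equiv.Perm.mem_support_cycleOf_iff.mp hwO).1
    have hgw : g w ≠ w :=
      Equiv.Perm.mem_support.mp (Equiv.Perm.support_cycleOf_le g u hwO)
    have hhw : h w ≠ w :=
      Equiv.Perm.mem_support.mp (Equiv.Perm.support_cycleOf_le h y0 hwO')
    have hgh : g ≠ h := by
      rintro rfl
      apply hO'ne
      rw [hO'eq]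
      have sc1 : g.SameCycle y0 w := (Equiv.Perm.mem_support_cycleOf_iff.mp hwO').1
      rw [(sc1.trans hsame.symm).cycleOf_eq]
    have hd : ∀ z, g z ≠ z → h z ≠ z → z = w := by
      intro z hz1 hz2
      have hcard := hsplit g hg h hh hgh
      have hzmem : z ∈ g.support ∩ h.support :=
        Finset.mem_inter.mpr ⟨Equiv.Perm.mem_support.mpr hz1, Equiv.Perm.mem_support.mpr hz2⟩
      have hwmem : w ∈ g.support ∩ h.support :=
        Finset.mem_inter.mpr ⟨Equiv.Perm.mem_support.mpr hgw, Equiv.Perm.mem_support.mpr hhw⟩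
      exact Finset.card_le_one.mp hcard z hzmem w hwmem
    exact ⟨h, hh, w, hsame, hgw, hhw, hd⟩
  -- derive a good triple from any moved point
  have triple : ∀ g ∈ T, ∀ u : Fin n, g u ≠ u → ∃ B : Finset (Fin n),
      B.card = 3 ∧ Good G B := by
    intro g hg u hu
    obtain ⟨h, hh, w, _, hgw, hhw, hd⟩ := partner g hg u hu
    have hne1 : g w ≠ w := hgw
    have hne2 : h w ≠ w := hhw
    have hne3 : g w ≠ h w := moved_ne hgw hhw hd
    have hcyc : cyc3 w (g w) (h w) ∈ G := by
      rw [← commutator_eq_cyc3 g h w hgw hhw hd]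
      exact G.mul_mem (G.mul_mem (G.mul_mem (hTG hg) (hTG hh)) (G.inv_mem (hTG hg)))
        (G.inv_mem (hTG hh))
    refine ⟨{w, g w, h w}, ?_, good_triple (Ne.symm hne1) (Ne.symm hne2) hne3 hcyc⟩
    rw [Finset.card_insert_of_notMem (by
        simp only [Finset.mem_insert, Finset.mem_singleton]
        push_neg
        exact ⟨Ne.symm hne1, Ne.symm hne2⟩),
      Finset.card_insert_of_notMem (by simp [hne3]), Finset.card_singleton]
  -- a maximal good set of size ≥ 3
  have hSne : {B : Finset (Fin n) | 3 ≤ B.card ∧ Good G B}.Nonempty := by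
    obtain ⟨u, hu⟩ := hmove g0 hg0
    obtain ⟨B, hB3, hBgood⟩ := triple g0 hg0 u hu
    exact ⟨B, le_of_eq hB3.symm, hBgood⟩
  obtain ⟨Δ, hΔS, hΔmax⟩ :=
    (Set.toFinite {B : Finset (Fin n) | 3 ≤ B.card ∧ Good G B}).exists_maximalFor
      Finset.card _ hSne
  obtain ⟨hΔ3, hΔgood⟩ := hΔS
  -- Δ is a block
  have hblock : ∀ γ : Equiv.Perm (Fin n), γ ∈ G → Δ.image γ = Δ ∨ Disjoint (Δ.image γ) Δ := by
    intro γ hγ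
    by_cases hdis : Disjoint (Δ.image γ) Δ
    · exact Or.inr hdis
    left
    obtain ⟨z, hz1, hz2⟩ := Finset.not_disjoint_iff.mp hdis
    have hcardim : (Δ.image γ).card = Δ.card := Finset.card_image_of_injective Δ γ.injective
    have hgoodU : Good G (Δ.image γ ∪ Δ) :=
      good_union hz1 hz2 (good_image hγ hΔgood) hΔgood (by omega) hΔ3
    have hUS : (Δ.image γ ∪ Δ) ∈ {B : Finset (Fin n) | 3 ≤ B.card ∧ Good G B} := by
      constructor
      · calc (3 : ℕ) ≤ Δ.card := hΔ3
          _ ≤ (Δ.image γ ∪ Δ).card := Finset.card_le_card Finset.subset_union_right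
      · exact hgoodU
    have hcard_eq : Δ.card = (Δ.image γ ∪ Δ).card :=
      le_antisymm (Finset.card_le_card Finset.subset_union_right)
        (hΔmax hUS (Finset.card_le_card Finset.subset_union_right))
    have hUeq : Δ = Δ.image γ ∪ Δ := by
      apply Finset.eq_of_subset_of_card_le Finset.subset_union_right
      omega
    have himsub : Δ.image γ ⊆ Δ := by
      intro v hv
      have hvv : v ∈ Δ.image γ ∪ Δ := Finset.mem_union_left _ hv
      rwa [← hUeq] at hvv
    exact Finset.eq_of_subset_of_card_le himsub (by omega)
  -- every element of T maps Δ into Δ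
  have stab : ∀ g ∈ T, ∀ u ∈ Δ, g u ∈ Δ := by
    intro g hg u hu
    by_cases hgu : g u = u
    · rw [hgu]; exact hu
    obtain ⟨h, hh, w, hsame, hgw, hhw, hd⟩ := partner g hg u hgu
    have hne3 : g w ≠ h w := moved_ne hgw hhw hd
    have hcyc : cyc3 w (g w) (h w) ∈ G := by
      rw [← commutator_eq_cyc3 g h w hgw hhw hd]
      exact G.mul_mem (G.mul_mem (G.mul_mem (hTG hg) (hTG hh)) (G.inv_mem (hTG hg)))
        (G.inv_mem (hTG hh))
    obtain ⟨i, hi⟩ := hsame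
    set γ := (g ^ i)⁻¹ with hγdef
    have hγG : γ ∈ G := G.inv_mem (Subgroup.zpow_mem G (hTG hg) i)
    have hγw : γ w = u := by
      rw [← hi, hγdef]
      exact Equiv.symm_apply_apply (g ^ i) u
    have hcommgγ : γ * g = g * γ := by
      have h1 : Commute g (g ^ i) := Commute.zpow_right (Commute.refl g) i
      exact (h1.inv_right).symm
    have hγgw : γ (g w) = g u := by
      have : (γ * g) w = (g * γ) w := by rw [hcommgγ]
      simp only [Equiv.Perm.mul_apply] at this
      rw [this, hγw]
    have hconjcyc : cyc3 u (g u) (γ (h w)) ∈ G := by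
      have := cyc3_conj γ w (g w) (h w)
      rw [hγw, hγgw] at this
      rw [← this]
      exact G.mul_mem (G.mul_mem hγG hcyc) (G.inv_mem hγG)
    -- distinctness of the conjugated triple
    have hd1 : u ≠ g u := by
      rw [← hγgw, ← hγw]
      exact fun hc => hgw (γ.injective hc).symm
    have hd2 : u ≠ γ (h w) := by
      rw [← hγw]
      exact fun hc => hhw (γ.injective hc).symm
    have hd3 : g u ≠ γ (h w) := by
      rw [← hγgw]
      exact fun hc => hne3 (γ.injective hc)
    have := block_lemma hΔ3 hblock hd1 hd2 hd3 hconjcyc hu (Or.inl rfl)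
    rwa [cyc3_xa hd1.symm hd3] at this
  -- Δ is all of Fin n
  have hΔuniv : ∀ z : Fin n, z ∈ Δ := by
    by_contra hcon
    push_neg at hcon
    obtain ⟨y, hy⟩ := hcon
    have hΔne : Δ.Nonempty := Finset.card_pos.mp (by omega)
    obtain ⟨x0, hx0⟩ := hΔne
    -- the stabilizer of Δ is a subgroup containing T
    let K : Subgroup (Equiv.Perm (Fin n)) :=
      { carrier := {σ : Equiv.Perm (Fin n) | ∀ u ∈ Δ, σ u ∈ Δ}
        one_mem' := fun u hu => by simpa using hu
        mul_mem' := by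
          intro σ τ hσ hτ u hu
          exact hσ _ (hτ u hu)
        inv_mem' := by
          intro σ hσ
          have himsub : Δ.image σ ⊆ Δ := by
            intro v hv
            obtain ⟨u, hu, rfl⟩ := Finset.mem_image.mp hv
            exact hσ u hu
          have him : Δ.image σ = Δ := Finset.eq_of_subset_of_card_le himsub
            (le_of_eq (Finset.card_image_of_injective Δ σ.injective).symm)
          intro u hu
          rw [← him] at hu
          obtain ⟨v, hv, hveq⟩ := Finset.mem_image.mp hu
          have : σ⁻¹ u = v := by rw [← hveq]; exact Equiv.symm_apply_apply _ _
          rw [this]; exact hv }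
    have hGK : G ≤ K := by
      rw [hG]
      apply (Subgroup.closure_le K).mpr
      intro g hg
      exact stab g hg
    obtain ⟨g, hgmem, hgx⟩ := hconn x0 y
    exact hy (hgx ▸ hGK hgmem x0 hx0)
  -- conclusion: G contains the alternating group
  have hall : ∀ σ : Equiv.Perm (Fin n), σ.IsThreeCycle → σ ∈ G := by
    intro σ hσ
    obtain ⟨a, b, c, hab, hac, hbc, rfl⟩ := isThreeCycle_eq_cyc3 hσ
    exact hΔgood a b c (hΔuniv a) (hΔuniv b) (hΔuniv c) hab hac hbc
  have hAle : alternatingGroup (Fin n) ≤ G := by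
    rw [← Equiv.Perm.closure_three_cycles_eq_alternating]
    exact (Subgroup.closure_le G).mpr (fun σ hσ => hall σ hσ)
  -- sign of g0 is -1
  have hcardle : Multiset.card A ≤ A.sum := by
    have := Multiset.card_nsmul_le_sum (s := A) (a := 1) (fun x hx => le_trans (by norm_num) (hA2 x hx))
    simpa using this
  have hoddsum : Odd (A.sum + Multiset.card A) := by
    obtain ⟨m, hm⟩ := hodd
    exact ⟨m + Multiset.card A, by omega⟩
  have hsign : Equiv.Perm.sign g0 = -1 := by
    rw [Equiv.Perm.sign_of_cycleType, htype g0 hg0]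
    exact Odd.neg_one_pow hoddsum
  -- finish
  rw [eq_top_iff]
  intro σ _
  rcases Int.units_eq_one_or (Equiv.Perm.sign σ) with hs | hs
  · exact hAle (Equiv.Perm.mem_alternatingGroup.mpr hs)
  · have hmem : σ * g0 ∈ alternatingGroup (Fin n) := by
      rw [Equiv.Perm.mem_alternatingGroup, Equiv.Perm.sign_mul, hs, hsign]
      norm_num
    have : σ * g0 ∈ G := hAle hmem
    have hfin : σ = (σ * g0) * g0⁻¹ := by group
    rw [hfin]
    exact G.mul_mem this (G.inv_mem (hTG hg0))
end

section
/- Let A be a nonempty multiset of integers each ≥ 2, let k ≥ 1, and let B be the multiset consisting of k copies of A (so B = A + A + … + A, k times, as a multiset sum). If T is a subset of the extended conjugacy class C(B) in S_n that generates S_n, then there exists a subset T' of the extended conjugacy class C(A) in S_n that generates S_n with |T'| ≤ k·|T|. -/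
open Equiv Equiv.Perm

lemma multiset_pullback {α β : Type*} [DecidableEq α] [DecidableEq β] (f : α → β) :
    ∀ (B : Multiset β) (M : Multiset α), B ≤ M.map f → ∃ N, N ≤ M ∧ N.map f = B := by
  intro B
  induction B using Multiset.induction with
  | empty => exact fun M _ => ⟨0, Multiset.zero_le _, rfl⟩
  | cons b B ih =>
    intro M hle
    have hb : b ∈ M.map f := Multiset.mem_of_le hle (Multiset.mem_cons_self _ _)
    obtain ⟨a, haM, rfl⟩ := Multiset.mem_map.mp hb
    have h2 : B ≤ (M.erase a).map f := by
      rw [Multiset.map_erase_of_mem f M haM]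
      have := Multiset.erase_le_erase (f a) hle
      simpa using this
    obtain ⟨N, hNle, hNmap⟩ := ih (M.erase a) h2
    refine ⟨a ::ₘ N, ?_, by simp [hNmap]⟩
    rw [← Multiset.cons_erase haM]
    exact Multiset.cons_le_cons a hNle

lemma split_lemma {n : ℕ} (A : Multiset ℕ) :
    ∀ (k : ℕ) (g : Equiv.Perm (Fin n)), g.cycleType = k • A →
      ∃ F : Finset (Equiv.Perm (Fin n)),
        (∀ h ∈ F, h.cycleType = A) ∧
        g ∈ Subgroup.closure (F : Set (Equiv.Perm (Fin n))) ∧ F.card ≤ k := by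
  intro k
  induction k with
  | zero =>
    intro g hg
    simp only [zero_smul] at hg
    refine ⟨∅, by simp, ?_, by simp⟩
    rw [Equiv.Perm.cycleType_eq_zero] at hg
    simp [hg]
  | succ k ih =>
    intro g hg
    have hsum : g.cycleType = A + k • A := by rw [hg, succ_nsmul']
    have hle : A ≤ g.cycleFactorsFinset.1.map (Finset.card ∘ Equiv.Perm.support) := by
      rw [← Equiv.Perm.cycleType_def, hsum]; exact Multiset.le_add_right _ _
    obtain ⟨N, hNle, hNmap⟩ := multiset_pullback _ A _ hle
    have hNnodup : N.Nodup := Multiset.nodup_of_le hNle g.cycleFactorsFinset.2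
    set S : Finset (Equiv.Perm (Fin n)) := ⟨N, hNnodup⟩ with hS
    have hSsub : S ⊆ g.cycleFactorsFinset := fun x hx =>
      Multiset.mem_of_le hNle hx
    have hScomm : (S : Set (Equiv.Perm (Fin n))).Pairwise Commute :=
      (Equiv.Perm.cycleFactorsFinset_mem_commute g).mono (by exact_mod_cast hSsub)
    have hSdisj : (S : Set (Equiv.Perm (Fin n))).Pairwise Equiv.Perm.Disjoint :=
      (Equiv.Perm.cycleFactorsFinset_pairwise_disjoint g).mono (by exact_mod_cast hSsub)
    set h : Equiv.Perm (Fin n) := S.noncommProd id (hScomm.imp (fun _ _ hc => hc)) with hh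
    have hhT : h.cycleType = A := by
      rw [Equiv.Perm.cycleType_eq' S
        (fun f hf => (Equiv.Perm.mem_cycleFactorsFinset_iff.mp (hSsub hf)).1) hSdisj rfl]
      exact hNmap
    -- complement
    set Sc : Finset (Equiv.Perm (Fin n)) := g.cycleFactorsFinset \ S with hSc
    have hunion : S ∪ Sc = g.cycleFactorsFinset := Finset.union_sdiff_of_subset hSsub
    have hdisj : Disjoint S Sc := Finset.disjoint_sdiff
    have hcommU : { x | x ∈ S ∪ Sc }.Pairwise (Function.onFun Commute id) := by
      rw [hunion]
      exact (Equiv.Perm.cycleFactorsFinset_mem_commute g).imp (fun _ _ hc => hc)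
    have hprod : h * Sc.noncommProd id
        (hcommU.mono <| Finset.coe_subset.2 Finset.subset_union_right) = g := by
      rw [hh, ← Finset.noncommProd_union_of_disjoint hdisj id hcommU]
      have hgp := Equiv.Perm.cycleFactorsFinset_noncommProd g
        ((Equiv.Perm.cycleFactorsFinset_mem_commute g).imp fun _ _ hc => hc)
      rw [← hgp]
      exact Finset.noncommProd_congr hunion (fun x _ => rfl) _
    set h' : Equiv.Perm (Fin n) := Sc.noncommProd id
        (hcommU.mono <| Finset.coe_subset.2 Finset.subset_union_right) with hh'
    have hSccomm : (Sc : Set (Equiv.Perm (Fin n))).Pairwise Equiv.Perm.Disjoint :=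
      (Equiv.Perm.cycleFactorsFinset_pairwise_disjoint g).mono
        (by exact_mod_cast Finset.sdiff_subset)
    have hh'T : h'.cycleType = k • A := by
      have : h'.cycleType = Sc.1.map (Finset.card ∘ Equiv.Perm.support) :=
        Equiv.Perm.cycleType_eq' Sc
          (fun f hf => (Equiv.Perm.mem_cycleFactorsFinset_iff.mp
            (Finset.sdiff_subset hf)).1) hSccomm rfl
      rw [this]
      have hval : Sc.1 = g.cycleFactorsFinset.1 - N := rfl
      have hadd : g.cycleFactorsFinset.1 = N + (g.cycleFactorsFinset.1 - N) := by
        rw [add_comm, tsub_add_cancel_of_le hNle]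
      have := congrArg (Multiset.map (Finset.card ∘ Equiv.Perm.support)) hadd
      rw [Multiset.map_add] at this
      rw [← Equiv.Perm.cycleType_def, hsum, hNmap] at this
      rw [hval]
      exact (add_left_cancel this).symm
    obtain ⟨F', hF'A, hF'mem, hF'card⟩ := ih h' hh'T
    refine ⟨insert h F', ?_, ?_, ?_⟩
    · intro x hx
      rcases Finset.mem_insert.mp hx with rfl | hx
      · exact hhT
      · exact hF'A x hx
    · have hmemh : h ∈ Subgroup.closure ((insert h F' : Finset _) : Set (Equiv.Perm (Fin n))) :=
        Subgroup.subset_closure (by simp)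
      have hmemh' : h' ∈ Subgroup.closure ((insert h F' : Finset _) : Set (Equiv.Perm (Fin n))) := by
        refine Subgroup.closure_mono ?_ hF'mem
        intro x hx; simp only [Finset.coe_insert, Set.mem_insert_iff]; right; exact hx
      rw [← hprod]
      exact mul_mem hmemh hmemh'
    · calc (insert h F').card ≤ F'.card + 1 := Finset.card_insert_le _ _
        _ ≤ k + 1 := by omega

/-- Let `A` be a nonempty multiset of integers `≥ 2`, `k ≥ 1`, and
`B = k • A` the multiset sum of `k` copies of `A`. If `T ⊆ C(B)` generates
`S_n`, then there is `T' ⊆ C(A)` generating `S_n` with `|T'| ≤ k·|T|`. -/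
theorem stmt_13 (n : ℕ) (A : Multiset ℕ) (hA : A ≠ 0) (hA2 : ∀ a ∈ A, 2 ≤ a)
    (k : ℕ) (hk : 1 ≤ k)
    (T : Finset (Equiv.Perm (Fin n))) (hT : ∀ g ∈ T, g.cycleType = k • A)
    (hgen : Subgroup.closure (T : Set (Equiv.Perm (Fin n))) = ⊤) :
    ∃ T' : Finset (Equiv.Perm (Fin n)),
      (∀ g ∈ T', g.cycleType = A) ∧
      Subgroup.closure (T' : Set (Equiv.Perm (Fin n))) = ⊤ ∧
      T'.card ≤ k * T.card := by
  choose F hFA hFmem hFcard using fun g (hg : g ∈ T) => split_lemma A k g (hT g hg)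
  refine ⟨T.attach.biUnion (fun g => F g.1 g.2), ?_, ?_, ?_⟩
  · intro x hx
    obtain ⟨g, _, hgx⟩ := Finset.mem_biUnion.mp hx
    exact hFA g.1 g.2 x hgx
  · rw [eq_top_iff, ← hgen]
    rw [Subgroup.closure_le]
    intro g hg
    have hg' : g ∈ T := hg
    refine Subgroup.closure_mono ?_ (hFmem g hg')
    intro x hx
    simp only [Finset.coe_biUnion, Set.mem_iUnion]
    exact ⟨⟨g, hg'⟩, Finset.mem_attach _ _, hx⟩
  · calc (T.attach.biUnion (fun g => F g.1 g.2)).card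
        ≤ ∑ g ∈ T.attach, (F g.1 g.2).card := Finset.card_biUnion_le
      _ ≤ ∑ _g ∈ T.attach, k := Finset.sum_le_sum (fun g _ => hFcard g.1 g.2)
      _ = k * T.card := by simp [mul_comm]
end

section
/- Let k ≥ 2 and let T ⊆ S_n be a split set of k-cycles (the supports of any two distinct elements of T intersect in at most one point), and let t_1, t_2 be distinct elements of T. Then in the Cayley graph Cay(S_n, T) there exists a unique vertex x different from the identity that is adjacent to both t_1 and t_2 (equivalently, a unique 4-cycle containing the path t_2 → identity → t_1) if and only if t_1t_2 = t_2t_1; moreover, when t_1 and t_2 commute, this unique common neighbor is x = t_1t_2, giving the 4-cycle identity → t_1 → t_1t_2 → t_2 → identity. -/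
/-- The Cayley graph of a group `G` with connection set `S`. -/
def cayleyGraph (G : Type*) [Group G] (S : Set G) : SimpleGraph G where
  Adj g h := g ≠ h ∧ (g * h⁻¹ ∈ S ∨ h * g⁻¹ ∈ S)
  symm := ⟨fun g h ⟨hne, hmem⟩ => ⟨hne.symm, hmem.symm⟩⟩
  loopless := ⟨fun g hg => hg.1 rfl⟩

open Equiv Equiv.Perm Finset

lemma swap_eq_of_pair_eq {α : Type*} [DecidableEq α] {x y u v : α} (hxy : x ≠ y)
    (h : ({x, y} : Finset α) = {u, v}) : Equiv.swap x y = Equiv.swap u v := by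
  have hx : x ∈ ({u, v} : Finset α) := h ▸ Finset.mem_insert_self x {y}
  have hy : y ∈ ({u, v} : Finset α) := h ▸ Finset.mem_insert_of_mem (Finset.mem_singleton_self y)
  simp only [Finset.mem_insert, Finset.mem_singleton] at hx hy
  rcases hx with rfl | rfl <;> rcases hy with rfl | rfl
  · exact absurd rfl hxy
  · rfl
  · exact Equiv.swap_comm _ _
  · exact absurd rfl hxy

lemma disjoint_cycle_mul_eq {α : Type*} [DecidableEq α] [Fintype α]
    {f g f' g' : Perm α} (hf : f.IsCycle) (hg : g.IsCycle) (hf' : f'.IsCycle) (hg' : g'.IsCycle)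
    (hd : Perm.Disjoint f g) (hd' : Perm.Disjoint f' g') (h : f * g = f' * g') :
    (f' = f ∧ g' = g) ∨ (f' = g ∧ g' = f) := by
  have h1 : (f * g).cycleFactorsFinset = {f, g} := by
    rw [hd.cycleFactorsFinset_mul_eq_union, hf.cycleFactorsFinset_eq_singleton,
      hg.cycleFactorsFinset_eq_singleton]
    rfl
  have h2 : (f * g).cycleFactorsFinset = {f', g'} := by
    rw [h, hd'.cycleFactorsFinset_mul_eq_union, hf'.cycleFactorsFinset_eq_singleton,
      hg'.cycleFactorsFinset_eq_singleton]
    rfl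
  have hpair : ({f', g'} : Finset (Perm α)) = {f, g} := h2 ▸ h1
  have hfg' : f' ≠ g' := by
    rintro rfl
    exact hf'.ne_one (Perm.disjoint_refl_iff.mp hd')
  have hf'm : f' ∈ ({f, g} : Finset (Perm α)) := hpair ▸ Finset.mem_insert_self f' {g'}
  have hg'm : g' ∈ ({f, g} : Finset (Perm α)) :=
    hpair ▸ Finset.mem_insert_of_mem (Finset.mem_singleton_self g')
  simp only [Finset.mem_insert, Finset.mem_singleton] at hf'm hg'm
  rcases hf'm with rfl | rfl <;> rcases hg'm with rfl | rfl
  · exact absurd rfl hfg'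
  · exact Or.inl ⟨rfl, rfl⟩
  · exact Or.inr ⟨rfl, rfl⟩
  · exact absurd rfl hfg'

lemma adj_extract {n : ℕ} {T : Set (Equiv.Perm (Fin n))} {t x : Equiv.Perm (Fin n)}
    (h : (cayleyGraph (Equiv.Perm (Fin n)) T).Adj t x) :
    t ≠ x ∧ ∃ a ∈ T, x * t⁻¹ = a ∨ x * t⁻¹ = a⁻¹ := by
  obtain ⟨hne, h1 | h2⟩ := h
  · exact ⟨hne, t * x⁻¹, h1, Or.inr (by simp [mul_inv_rev])⟩
  · exact ⟨hne, x * t⁻¹, h2, Or.inl rfl⟩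

lemma support_mul_inv_of_inter {n : ℕ} {t₁ t₂ : Equiv.Perm (Fin n)} {p : Fin n}
    (hp : t₁.support ∩ t₂.support = {p}) :
    (t₁ * t₂⁻¹).support = t₁.support ∪ t₂.support := by
  apply subset_antisymm
  · refine (support_mul_le _ _).trans ?_
    rw [support_inv]
    exact le_rfl
  · intro z hz
    rw [Finset.mem_union] at hz
    rw [mem_support]
    simp only [Perm.mul_apply]
    by_cases h2 : t₂⁻¹ z = z
    · have hz1 : z ∈ t₁.support := by
        rcases hz with h | h
        · exact h
        · have h3 := congrArg t₂ h2
          rw [Equiv.Perm.inv_def, Equiv.apply_symm_apply] at h3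
          exact absurd h3.symm (mem_support.mp h)
      rw [h2]
      exact mem_support.mp hz1
    · set w := t₂⁻¹ z with hw
      have htw : t₂ w = z := by rw [hw]; exact t₂.apply_symm_apply z
      have hwS2 : w ∈ t₂.support := mem_support.mpr (by rw [htw]; exact fun hc => h2 hc.symm)
      by_cases h1 : t₁ w = w
      · rw [h1]; exact h2
      · have hwS1 : w ∈ t₁.support := mem_support.mpr h1
        have hwp : w = p := by
          have hm : w ∈ t₁.support ∩ t₂.support := Finset.mem_inter.mpr ⟨hwS1, hwS2⟩
          rwa [hp, Finset.mem_singleton] at hm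
        intro hc
        have hpS1 : p ∈ t₁.support := hwp ▸ hwS1
        have hzS1 : z ∈ t₁.support := by rw [← hc]; exact apply_mem_support.mpr hwS1
        have hzS2 : z ∈ t₂.support := by rw [← support_inv]; exact mem_support.mpr h2
        have hzp : z = p := by
          have hm : z ∈ t₁.support ∩ t₂.support := Finset.mem_inter.mpr ⟨hzS1, hzS2⟩
          rwa [hp, Finset.mem_singleton] at hm
        rw [hwp, hzp] at hc
        exact mem_support.mp hpS1 hc

lemma key {n k : ℕ} (hk : 2 ≤ k) {T : Set (Equiv.Perm (Fin n))}
    (hcyc : ∀ t ∈ T, t.IsCycle ∧ t.support.card = k)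
    (hsplit : ∀ g ∈ T, ∀ h ∈ T, g ≠ h → (g.support ∩ h.support).card ≤ 1)
    {t₁ t₂ : Equiv.Perm (Fin n)} (ht₁ : t₁ ∈ T) (ht₂ : t₂ ∈ T) (hne : t₁ ≠ t₂)
    (hcomm : t₁ * t₂ ≠ t₂ * t₁)
    {x : Equiv.Perm (Fin n)} (hx : x ≠ 1)
    (h1 : (cayleyGraph (Equiv.Perm (Fin n)) T).Adj t₁ x)
    (h2 : (cayleyGraph (Equiv.Perm (Fin n)) T).Adj t₂ x) :
    t₁ * t₂ * t₁⁻¹ ∈ T ∧ t₂ * t₁ * t₂⁻¹ ∈ T := by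
  obtain ⟨ht₁c, ht₁k⟩ := hcyc t₁ ht₁
  obtain ⟨ht₂c, ht₂k⟩ := hcyc t₂ ht₂
  have hile : (t₁.support ∩ t₂.support).card ≤ 1 := hsplit t₁ ht₁ t₂ ht₂ hne
  have hipos : (t₁.support ∩ t₂.support).card ≠ 0 := by
    intro h0
    have hd : _root_.Disjoint t₁.support t₂.support :=
      Finset.disjoint_iff_inter_eq_empty.mpr (Finset.card_eq_zero.mp h0)
    exact hcomm ((Equiv.Perm.disjoint_iff_disjoint_support.mpr hd).commute.eq)
  obtain ⟨p, hp⟩ := Finset.card_eq_one.mp (le_antisymm hile (Nat.one_le_iff_ne_zero.mpr hipos))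
  have hsuppc : (t₁ * t₂⁻¹).support = t₁.support ∪ t₂.support := support_mul_inv_of_inter hp
  have hcardU : (t₁.support ∪ t₂.support).card + 1 = k + k := by
    have h3 := Finset.card_union_add_card_inter t₁.support t₂.support
    rw [hp] at h3
    simpa [ht₁k, ht₂k] using h3
  obtain ⟨hne1x, a, ha, hu⟩ := adj_extract h1
  obtain ⟨hne2x, b, hb, hv⟩ := adj_extract h2
  obtain ⟨hac, hak⟩ := hcyc a ha
  obtain ⟨hbc, hbk⟩ := hcyc b hb
  set u := x * t₁⁻¹ with hudef
  set v := x * t₂⁻¹ with hvdef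
  have hUA : u.support = a.support := by
    rcases hu with h | h <;> rw [h] <;> simp [support_inv]
  have hVB : v.support = b.support := by
    rcases hv with h | h <;> rw [h] <;> simp [support_inv]
  have hc : u⁻¹ * v = t₁ * t₂⁻¹ := by rw [hudef, hvdef]; group
  have hxu : x = u * t₁ := by rw [hudef]; group
  have hxv : x = v * t₂ := by rw [hvdef]; group
  have hab : a ≠ b := by
    rintro rfl
    have hsub : (t₁ * t₂⁻¹).support ⊆ a.support := by
      rw [← hc]
      refine (support_mul_le _ _).trans ?_
      rw [support_inv, hUA, hVB]
      exact sup_le le_rfl le_rfl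
    have hca := Finset.card_le_card hsub
    rw [hsuppc, hak] at hca
    omega
  have hABle : (a.support ∩ b.support).card ≤ 1 := hsplit a ha b hb hab
  have hsubU : t₁.support ∪ t₂.support ⊆ a.support ∪ b.support := by
    rw [← hsuppc, ← hc]
    refine (support_mul_le _ _).trans ?_
    rw [support_inv, hUA, hVB]
    exact le_rfl
  have hABpos : (a.support ∩ b.support).card ≠ 0 := by
    intro h0
    have hdisAB : _root_.Disjoint a.support b.support :=
      Finset.disjoint_iff_inter_eq_empty.mpr (Finset.card_eq_zero.mp h0)
    have hdab : _root_.Disjoint u⁻¹.support v.support := by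
      rw [support_inv, hUA, hVB]; exact hdisAB
    have hduv : Equiv.Perm.Disjoint u⁻¹ v := Equiv.Perm.disjoint_iff_disjoint_support.mpr hdab
    have hsm := hduv.support_mul
    rw [hc, hsuppc, support_inv, hUA, hVB] at hsm
    have h2k : (a.support ∪ b.support).card = k + k := by
      rw [Finset.card_union_of_disjoint hdisAB, hak, hbk]
    rw [hsm, h2k] at hcardU
    omega
  have hABcard : (a.support ∩ b.support).card = 1 :=
    le_antisymm hABle (Nat.one_le_iff_ne_zero.mpr hABpos)
  have hcardAB : (a.support ∪ b.support).card + 1 = k + k := by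
    have h3 := Finset.card_union_add_card_inter a.support b.support
    rw [hABcard, hak, hbk] at h3
    omega
  have hUeq : t₁.support ∪ t₂.support = a.support ∪ b.support :=
    Finset.eq_of_subset_of_card_le hsubU (by omega)
  have hpmem : p ∈ t₁.support ∩ t₂.support := by
    rw [hp]; exact Finset.mem_singleton_self p
  have hpS1 : p ∈ t₁.support := (Finset.mem_inter.mp hpmem).1
  have hpS2 : p ∈ t₂.support := (Finset.mem_inter.mp hpmem).2
  have hmemS2 : ∀ y, y ∈ t₁.support → y ≠ p → y ∉ t₂.support := by
    intro y hy hyp hc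
    have hm : y ∈ t₁.support ∩ t₂.support := Finset.mem_inter.mpr ⟨hy, hc⟩
    rw [hp, Finset.mem_singleton] at hm
    exact hyp hm
  have hmemS1 : ∀ y, y ∈ t₂.support → y ≠ p → y ∉ t₁.support := by
    intro y hy hyp hc
    have hm : y ∈ t₁.support ∩ t₂.support := Finset.mem_inter.mpr ⟨hc, hy⟩
    rw [hp, Finset.mem_singleton] at hm
    exact hyp hm
  rcases eq_or_lt_of_le hk with hk2 | hk3
  · -- k = 2 case
    have hk2' : k = 2 := hk2.symm
    have ht₁k2 : t₁.support.card = 2 := by rw [ht₁k, hk2']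
    have ht₂k2 : t₂.support.card = 2 := by rw [ht₂k, hk2']
    obtain ⟨q₁, hq₁def⟩ : ∃ q, t₁ p = q := ⟨_, rfl⟩
    obtain ⟨q₂, hq₂def⟩ : ∃ q, t₂ p = q := ⟨_, rfl⟩
    have hq₁S1 : q₁ ∈ t₁.support := hq₁def ▸ apply_mem_support.mpr hpS1
    have hq₁p : q₁ ≠ p := hq₁def ▸ mem_support.mp hpS1
    have hq₂S2 : q₂ ∈ t₂.support := hq₂def ▸ apply_mem_support.mpr hpS2
    have hq₂p : q₂ ≠ p := hq₂def ▸ mem_support.mp hpS2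
    have hq₁S2 : q₁ ∉ t₂.support := hmemS2 _ hq₁S1 hq₁p
    have hq₂S1 : q₂ ∉ t₁.support := hmemS1 _ hq₂S2 hq₂p
    have hq₁₂ : q₁ ≠ q₂ := fun hc => hq₂S1 (hc ▸ hq₁S1)
    have hS1 : t₁.support = {p, q₁} := by
      refine (Finset.eq_of_subset_of_card_le ?_ ?_).symm
      · rw [Finset.insert_subset_iff]
        exact ⟨hpS1, Finset.singleton_subset_iff.mpr hq₁S1⟩
      · rw [ht₁k2, Finset.card_pair (Ne.symm hq₁p)]
    have hS2 : t₂.support = {p, q₂} := by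
      refine (Finset.eq_of_subset_of_card_le ?_ ?_).symm
      · rw [Finset.insert_subset_iff]
        exact ⟨hpS2, Finset.singleton_subset_iff.mpr hq₂S2⟩
      · rw [ht₂k2, Finset.card_pair (Ne.symm hq₂p)]
    have ht₁swap : t₁ = Equiv.swap p q₁ := by
      obtain ⟨c, d, hcd, hcd'⟩ := card_support_eq_two.mp ht₁k2
      have hsupp : ({c, d} : Finset (Fin n)) = {p, q₁} := by
        rw [← Equiv.Perm.support_swap hcd, ← hcd', hS1]
      exact hcd'.trans (swap_eq_of_pair_eq hcd hsupp)
    have ht₂swap : t₂ = Equiv.swap p q₂ := by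
      obtain ⟨c, d, hcd, hcd'⟩ := card_support_eq_two.mp ht₂k2
      have hsupp : ({c, d} : Finset (Fin n)) = {p, q₂} := by
        rw [← Equiv.Perm.support_swap hcd, ← hcd', hS2]
      exact hcd'.trans (swap_eq_of_pair_eq hcd hsupp)
    have hclass : ∀ c ∈ T, c.support ⊆ t₁.support ∪ t₂.support →
        c = Equiv.swap p q₁ ∨ c = Equiv.swap p q₂ ∨ c = Equiv.swap q₁ q₂ := by
      intro c hcT hcsub
      obtain ⟨e, f, hef, hef'⟩ := card_support_eq_two.mp ((hcyc c hcT).2.trans hk2')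
      have hsuppe : (Equiv.swap e f).support = {e, f} := Equiv.Perm.support_swap hef
      have hesupp : e ∈ t₁.support ∪ t₂.support := by
        apply hcsub
        rw [hef', hsuppe]
        exact Finset.mem_insert_self e {f}
      have hfsupp : f ∈ t₁.support ∪ t₂.support := by
        apply hcsub
        rw [hef', hsuppe]
        exact Finset.mem_insert_of_mem (Finset.mem_singleton_self f)
      have he3 : e = p ∨ e = q₁ ∨ e = q₂ := by
        rw [Finset.mem_union, hS1, hS2] at hesupp
        simp only [Finset.mem_insert, Finset.mem_singleton] at hesupp
        rcases hesupp with (h | h) | (h | h)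
        · exact Or.inl h
        · exact Or.inr (Or.inl h)
        · exact Or.inl h
        · exact Or.inr (Or.inr h)
      have hf3 : f = p ∨ f = q₁ ∨ f = q₂ := by
        rw [Finset.mem_union, hS1, hS2] at hfsupp
        simp only [Finset.mem_insert, Finset.mem_singleton] at hfsupp
        rcases hfsupp with (h | h) | (h | h)
        · exact Or.inl h
        · exact Or.inr (Or.inl h)
        · exact Or.inl h
        · exact Or.inr (Or.inr h)
      rw [hef']
      rcases he3 with rfl | rfl | rfl
      · rcases hf3 with rfl | rfl | rfl
        · exact absurd rfl hef
        · exact Or.inl rfl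
        · exact Or.inr (Or.inl rfl)
      · rcases hf3 with rfl | rfl | rfl
        · exact Or.inl (Equiv.swap_comm _ _)
        · exact absurd rfl hef
        · exact Or.inr (Or.inr rfl)
      · rcases hf3 with rfl | rfl | rfl
        · exact Or.inr (Or.inl (Equiv.swap_comm _ _))
        · exact Or.inr (Or.inr (Equiv.swap_comm _ _))
        · exact absurd rfl hef
    have haC := hclass a ha (by rw [hUeq]; exact Finset.subset_union_left)
    have hbC := hclass b hb (by rw [hUeq]; exact Finset.subset_union_right)
    rw [← ht₁swap] at haC hbC
    rw [← ht₂swap] at haC hbC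
    have hainv : a⁻¹ = a := by
      obtain ⟨c, d, hcd, rfl⟩ := card_support_eq_two.mp (hak.trans hk2')
      exact Equiv.swap_inv c d
    have hbinv : b⁻¹ = b := by
      obtain ⟨c, d, hcd, rfl⟩ := card_support_eq_two.mp (hbk.trans hk2')
      exact Equiv.swap_inv c d
    have hueq : u = a := by
      rcases hu with h | h
      · exact h
      · rw [h, hainv]
    have hveq : v = b := by
      rcases hv with h | h
      · exact h
      · rw [h, hbinv]
    have hx1 : a * t₁ = b * t₂ := by rw [← hueq, ← hveq, ← hxu, ← hxv]
    have ht₁sq : t₁ * t₁ = 1 := by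
      conv_lhs => rw [ht₁swap]
      exact Equiv.swap_mul_self p q₁
    have ht₂sq : t₂ * t₂ = 1 := by
      conv_lhs => rw [ht₂swap]
      exact Equiv.swap_mul_self p q₂
    have hrT : Equiv.swap q₁ q₂ ∈ T := by
      rcases haC with ha2 | ha2 | ha2
      · exfalso
        apply hx
        rw [hxu, hueq, ha2, ht₁sq]
      · rcases hbC with hb2 | hb2 | hb2
        · rw [ha2, hb2] at hx1
          exact absurd hx1.symm hcomm
        · exact absurd (ha2.trans hb2.symm) hab
        · exact hb2 ▸ hb
      · rcases hbC with hb2 | hb2 | hb2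
        · exact ha2 ▸ ha
        · exfalso
          apply hx
          rw [hxv, hveq, hb2, ht₂sq]
        · exact absurd (ha2.trans hb2.symm) hab
    have hrc1 : t₁ * t₂ * t₁⁻¹ = Equiv.swap q₁ q₂ := by
      have h5 : Equiv.swap (t₁ p) (t₁ q₂) = t₁ * Equiv.swap p q₂ * t₁⁻¹ :=
        Equiv.swap_apply_apply t₁ p q₂
      rw [hq₁def, notMem_support.mp hq₂S1, ← ht₂swap] at h5
      exact h5.symm
    have hrc2 : t₂ * t₁ * t₂⁻¹ = Equiv.swap q₁ q₂ := by
      have h5 : Equiv.swap (t₂ p) (t₂ q₁) = t₂ * Equiv.swap p q₁ * t₂⁻¹ :=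
        Equiv.swap_apply_apply t₂ p q₁
      rw [hq₂def, notMem_support.mp hq₁S2, ← ht₁swap] at h5
      rw [← h5]
      exact Equiv.swap_comm _ _
    rw [hrc1, hrc2]
    exact ⟨hrT, hrT⟩
  · -- k ≥ 3 case
    exfalso
    have hsq : ∀ t : Equiv.Perm (Fin n), t.IsCycle → t.support.card = k →
        ∀ z, t z ≠ z → t (t z) ≠ z := by
      intro t htc htk z hz hcon
      have hpow : t ^ 2 = 1 := htc.pow_eq_one_iff.mpr ⟨z, hz, by simp [pow_two, Perm.mul_apply, hcon]⟩
      have hdvd : orderOf t ∣ 2 := orderOf_dvd_of_pow_eq_one hpow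
      rw [htc.orderOf, htk] at hdvd
      have := Nat.le_of_dvd (by norm_num) hdvd
      omega
    have haT : ∀ c : Equiv.Perm (Fin n), c ∈ T → c.support ⊆ t₁.support ∪ t₂.support →
        c = t₁ ∨ c = t₂ := by
      intro c hcT hcsub
      by_contra hcon
      push_neg at hcon
      have hc1 := hsplit c hcT t₁ ht₁ hcon.1
      have hc2 := hsplit c hcT t₂ ht₂ hcon.2
      have hceq : c.support = (c.support ∩ t₁.support) ∪ (c.support ∩ t₂.support) := by
        rw [← Finset.inter_union_distrib_left, Finset.inter_eq_left.mpr hcsub]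
      have hle := Finset.card_union_le (c.support ∩ t₁.support) (c.support ∩ t₂.support)
      rw [← hceq, (hcyc c hcT).2] at hle
      omega
    have haE := haT a ha (by rw [hUeq]; exact Finset.subset_union_left)
    have hbE := haT b hb (by rw [hUeq]; exact Finset.subset_union_right)
    -- rule out a = t₁ (and symmetrically b = t₂ leads to x = t₂²)
    have hx_ne_u : u ≠ t₁⁻¹ := by
      intro hcu
      apply hx
      rw [hxu, hcu, inv_mul_cancel]
    have hx_ne_v : v ≠ t₂⁻¹ := by
      intro hcv
      apply hx
      rw [hxv, hcv, inv_mul_cancel]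
    rcases haE with ha1 | ha1
    · -- a = t₁
      rw [ha1] at hu
      have hueq : u = t₁ := by
        rcases hu with h | h
        · exact h
        · exact absurd h hx_ne_u
      rcases hbE with hb1 | hb1
      · exact hab (by rw [ha1, hb1])
      · rw [hb1] at hv
        have hveq : v = t₂ := by
          rcases hv with h | h
          · exact h
          · exact absurd h hx_ne_v
        have hxsub1 : x.support ⊆ t₁.support := by
          rw [hxu, hueq]
          exact (support_mul_le _ _).trans (sup_le le_rfl le_rfl)
        have hxsub2 : x.support ⊆ t₂.support := by
          rw [hxv, hveq]
          exact (support_mul_le _ _).trans (sup_le le_rfl le_rfl)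
        have hxsub : x.support ⊆ t₁.support ∩ t₂.support :=
          Finset.subset_inter hxsub1 hxsub2
        rw [hp] at hxsub
        have hxcard : x.support.card ≤ 1 := by
          have := Finset.card_le_card hxsub
          simpa using this
        exact hx (card_support_le_one.mp hxcard)
    · -- a = t₂
      rw [ha1] at hu hUA
      rcases hbE with hb1 | hb1
      · -- b = t₁ : the main evaluation case
        rw [hb1] at hv hVB
        -- pick z ∈ supp t₁ with z ≠ p and t₁ z ≠ p
        have hzex : (t₁.support \ {p, t₁⁻¹ p}).Nonempty := by
          rw [← Finset.card_pos]
          have hle2 : ({p, t₁⁻¹ p} : Finset (Fin n)).card ≤ 2 :=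
            (Finset.card_insert_le _ _).trans (by simp)
          have hsd := Finset.le_card_sdiff ({p, t₁⁻¹ p} : Finset (Fin n)) t₁.support
          rw [ht₁k] at hsd
          omega
        obtain ⟨z, hz⟩ := hzex
        rw [Finset.mem_sdiff, Finset.mem_insert, Finset.mem_singleton] at hz
        push_neg at hz
        obtain ⟨hzS1, hzp, hzt⟩ := hz
        have ht₁zS1 : t₁ z ∈ t₁.support := apply_mem_support.mpr hzS1
        have ht₁zp : t₁ z ≠ p := by
          intro hcp
          exact hzt (by rw [← hcp, Equiv.Perm.inv_def, Equiv.symm_apply_apply])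
        have hequv : u * t₁ = v * t₂ := by rw [← hxu, ← hxv]
        have hufix : u (t₁ z) = t₁ z := by
          apply notMem_support.mp
          rw [hUA]
          exact hmemS2 _ ht₁zS1 ht₁zp
        have hzS2 : z ∉ t₂.support := hmemS2 _ hzS1 hzp
        have heval := DFunLike.congr_fun hequv z
        simp only [Perm.mul_apply] at heval
        rw [notMem_support.mp hzS2, hufix] at heval
        -- heval : t₁ z = v z
        have hveq : v = t₁ := by
          rcases hv with h | h
          · exact h
          · exfalso
            rw [h] at heval
            apply hsq t₁ ht₁c ht₁k z (mem_support.mp hzS1)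
            have h4 := congrArg t₁ heval.symm
            rw [Equiv.Perm.inv_def, Equiv.apply_symm_apply] at h4
            exact h4.symm
        -- symmetric: pick z' in supp t₂
        have hzex' : (t₂.support \ {p, t₂⁻¹ p}).Nonempty := by
          rw [← Finset.card_pos]
          have hle2 : ({p, t₂⁻¹ p} : Finset (Fin n)).card ≤ 2 :=
            (Finset.card_insert_le _ _).trans (by simp)
          have hsd := Finset.le_card_sdiff ({p, t₂⁻¹ p} : Finset (Fin n)) t₂.support
          rw [ht₂k] at hsd
          omega
        obtain ⟨z', hz'⟩ := hzex'
        rw [Finset.mem_sdiff, Finset.mem_insert, Finset.mem_singleton] at hz'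
        push_neg at hz'
        obtain ⟨hzS2', hzp', hzt'⟩ := hz'
        have ht₂zS2 : t₂ z' ∈ t₂.support := apply_mem_support.mpr hzS2'
        have ht₂zp : t₂ z' ≠ p := by
          intro hcp
          exact hzt' (by rw [← hcp, Equiv.Perm.inv_def, Equiv.symm_apply_apply])
        have hvfix : v (t₂ z') = t₂ z' := by
          apply notMem_support.mp
          rw [hVB]
          exact hmemS1 _ ht₂zS2 ht₂zp
        have hzS1' : z' ∉ t₁.support := hmemS1 _ hzS2' hzp'
        have heval' := DFunLike.congr_fun hequv z'
        simp only [Perm.mul_apply] at heval'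
        rw [notMem_support.mp hzS1', hvfix] at heval'
        -- heval' : u z' = t₂ z'
        have hueq : u = t₂ := by
          rcases hu with h | h
          · exact h
          · exfalso
            rw [h] at heval'
            apply hsq t₂ ht₂c ht₂k z' (mem_support.mp hzS2')
            have h4 := congrArg t₂ heval'
            rw [Equiv.Perm.inv_def, Equiv.apply_symm_apply] at h4
            exact h4.symm
        rw [hueq, hveq] at hequv
        exact hcomm hequv.symm
      · exact hab (by rw [ha1, hb1])

lemma commute_sol {n k : ℕ} (hk : 2 ≤ k) {T : Set (Equiv.Perm (Fin n))}
    (hcyc : ∀ t ∈ T, t.IsCycle ∧ t.support.card = k)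
    (hsplit : ∀ g ∈ T, ∀ h ∈ T, g ≠ h → (g.support ∩ h.support).card ≤ 1)
    {t₁ t₂ : Equiv.Perm (Fin n)} (ht₁ : t₁ ∈ T) (ht₂ : t₂ ∈ T) (hne : t₁ ≠ t₂)
    (hcomm : t₁ * t₂ = t₂ * t₁) (x : Equiv.Perm (Fin n)) :
    (x ≠ 1 ∧ (cayleyGraph (Equiv.Perm (Fin n)) T).Adj t₁ x ∧
      (cayleyGraph (Equiv.Perm (Fin n)) T).Adj t₂ x) ↔ x = t₁ * t₂ := by
  obtain ⟨ht₁c, ht₁k⟩ := hcyc t₁ ht₁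
  obtain ⟨ht₂c, ht₂k⟩ := hcyc t₂ ht₂
  have ht₁1 : t₁ ≠ 1 := by
    intro h
    rw [h, Equiv.Perm.support_one] at ht₁k
    simp at ht₁k
    omega
  have ht₂1 : t₂ ≠ 1 := by
    intro h
    rw [h, Equiv.Perm.support_one] at ht₂k
    simp at ht₂k
    omega
  have hdS : _root_.Disjoint t₁.support t₂.support := by
    by_contra hcon
    rw [Finset.not_disjoint_iff] at hcon
    obtain ⟨z, hz1, hz2⟩ := hcon
    have hz1' : t₁ z ∈ t₁.support := apply_mem_support.mpr hz1
    have hz2' : t₁ z ∈ t₂.support := by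
      rw [mem_support]
      intro hcc
      have h3 : t₁ (t₂ z) = t₂ (t₁ z) := by
        have h4 := DFunLike.congr_fun hcomm z
        simpa only [Perm.mul_apply] using h4
      rw [hcc] at h3
      exact mem_support.mp hz2 (t₁.injective h3)
    have hsub : ({z, t₁ z} : Finset (Fin n)) ⊆ t₁.support ∩ t₂.support := by
      rw [Finset.insert_subset_iff, Finset.singleton_subset_iff]
      exact ⟨Finset.mem_inter.mpr ⟨hz1, hz2⟩, Finset.mem_inter.mpr ⟨hz1', hz2'⟩⟩
    have hcard2 : ({z, t₁ z} : Finset (Fin n)).card = 2 :=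
      Finset.card_pair (Ne.symm (mem_support.mp hz1))
    have h5 := Finset.card_le_card hsub
    have hle := hsplit t₁ ht₁ t₂ ht₂ hne
    rw [hcard2] at h5
    omega
  have hdisj : Equiv.Perm.Disjoint t₁ t₂ := Equiv.Perm.disjoint_iff_disjoint_support.mpr hdS
  have h12ne : t₁ * t₂ ≠ 1 := by
    intro hcc
    have h3 : t₂ = t₁⁻¹ := eq_inv_of_mul_eq_one_right hcc
    have hS : t₁.support = ∅ := by
      have h4 := disjoint_self.mp (by rwa [h3, support_inv] at hdS)
      simpa using h4
    exact ht₁1 (Equiv.Perm.support_eq_empty_iff.mp hS)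
  constructor
  · rintro ⟨hx, hadj1, hadj2⟩
    obtain ⟨hne1x, a, ha, hu⟩ := adj_extract hadj1
    obtain ⟨hne2x, b, hb, hv⟩ := adj_extract hadj2
    obtain ⟨hac, hak⟩ := hcyc a ha
    obtain ⟨hbc, hbk⟩ := hcyc b hb
    set u := x * t₁⁻¹ with hudef
    set v := x * t₂⁻¹ with hvdef
    have hUA : u.support = a.support := by
      rcases hu with h | h <;> rw [h] <;> simp [support_inv]
    have hVB : v.support = b.support := by
      rcases hv with h | h <;> rw [h] <;> simp [support_inv]
    have hc : u⁻¹ * v = t₁ * t₂⁻¹ := by rw [hudef, hvdef]; group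
    have hxu : x = u * t₁ := by rw [hudef]; group
    have hxv : x = v * t₂ := by rw [hvdef]; group
    have hdisj2 : Equiv.Perm.Disjoint t₁ t₂⁻¹ := by
      rw [Equiv.Perm.disjoint_iff_disjoint_support, support_inv]
      exact hdS
    have hsuppc : (t₁ * t₂⁻¹).support = t₁.support ∪ t₂.support := by
      rw [hdisj2.support_mul, support_inv]
    have hcardc : (t₁ * t₂⁻¹).support.card = k + k := by
      rw [hsuppc, Finset.card_union_of_disjoint hdS, ht₁k, ht₂k]
    have hab : a ≠ b := by
      rintro rfl
      have hsub : (t₁ * t₂⁻¹).support ⊆ a.support := by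
        rw [← hc]
        refine (support_mul_le _ _).trans ?_
        rw [support_inv, hUA, hVB]
        exact sup_le le_rfl le_rfl
      have h5 := Finset.card_le_card hsub
      rw [hcardc, hak] at h5
      omega
    have hsubU : t₁.support ∪ t₂.support ⊆ a.support ∪ b.support := by
      rw [← hsuppc, ← hc]
      refine (support_mul_le _ _).trans ?_
      rw [support_inv, hUA, hVB]
      exact le_rfl
    have hABd : _root_.Disjoint a.support b.support := by
      have h3 := Finset.card_union_add_card_inter a.support b.support
      have h4 := Finset.card_le_card hsubU
      rw [Finset.card_union_of_disjoint hdS, ht₁k, ht₂k] at h4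
      rw [hak, hbk] at h3
      have h6 : (a.support ∩ b.support).card = 0 := by omega
      exact Finset.disjoint_iff_inter_eq_empty.mpr (Finset.card_eq_zero.mp h6)
    have hduv : Equiv.Perm.Disjoint u⁻¹ v := by
      rw [Equiv.Perm.disjoint_iff_disjoint_support, support_inv, hUA, hVB]
      exact hABd
    have hucyc : (u⁻¹).IsCycle := by
      rcases hu with h | h <;> rw [h]
      · exact hac.inv
      · rw [inv_inv]; exact hac
    have hvcyc : v.IsCycle := by
      rcases hv with h | h <;> rw [h]
      · exact hbc
      · exact hbc.inv
    have hres := disjoint_cycle_mul_eq hucyc hvcyc ht₁c ht₂c.inv hduv hdisj2 hc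
    rcases hres with ⟨h5, h6⟩ | ⟨h5, h6⟩
    · exfalso
      apply hx
      rw [h5] at hxu
      rw [hxu]
      group
    · rw [← h5] at hxv
      exact hxv
  · rintro rfl
    refine ⟨h12ne, ⟨?_, Or.inr ?_⟩, ⟨?_, Or.inr ?_⟩⟩
    · intro hcc
      exact ht₂1 (left_eq_mul.mp hcc)
    · rw [hcomm, mul_inv_cancel_right]
      exact ht₂
    · intro hcc
      exact ht₁1 (right_eq_mul.mp hcc)
    · rw [mul_inv_cancel_right]
      exact ht₁


/-- Let `T ⊆ S_n` be a split set of `k`-cycles and `t₁ ≠ t₂` in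
`T`. In `Cay(S_n, T)` there is a unique vertex `x ≠ 1` adjacent to both `t₁`
and `t₂` (a unique 4-cycle through the path `t₂ → 1 → t₁`) iff `t₁t₂ = t₂t₁`;
moreover when `t₁` and `t₂` commute this unique common neighbor is `t₁t₂`,
giving the 4-cycle `1 → t₁ → t₁t₂ → t₂ → 1`. -/
theorem stmt_16 (n k : ℕ) (hk : 2 ≤ k) (T : Set (Equiv.Perm (Fin n)))
    (hcyc : ∀ t ∈ T, t.IsCycle ∧ t.support.card = k)
    (hsplit : ∀ g ∈ T, ∀ h ∈ T, g ≠ h → (g.support ∩ h.support).card ≤ 1)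
    (t₁ t₂ : Equiv.Perm (Fin n)) (ht₁ : t₁ ∈ T) (ht₂ : t₂ ∈ T) (hne : t₁ ≠ t₂) :
    ((∃! x : Equiv.Perm (Fin n), x ≠ 1 ∧
        (cayleyGraph (Equiv.Perm (Fin n)) T).Adj t₁ x ∧
        (cayleyGraph (Equiv.Perm (Fin n)) T).Adj t₂ x) ↔ t₁ * t₂ = t₂ * t₁) ∧
    (t₁ * t₂ = t₂ * t₁ → ∀ x : Equiv.Perm (Fin n),
      (x ≠ 1 ∧ (cayleyGraph (Equiv.Perm (Fin n)) T).Adj t₁ x ∧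
        (cayleyGraph (Equiv.Perm (Fin n)) T).Adj t₂ x) ↔ x = t₁ * t₂) := by
  have ht₁1 : t₁ ≠ 1 := by
    intro h
    have hc := (hcyc t₁ ht₁).2
    rw [h, Equiv.Perm.support_one] at hc
    simp at hc
    omega
  have ht₂1 : t₂ ≠ 1 := by
    intro h
    have hc := (hcyc t₂ ht₂).2
    rw [h, Equiv.Perm.support_one] at hc
    simp at hc
    omega
  constructor
  · constructor
    · intro hEx
      by_contra hcomm
      obtain ⟨x, hxsol, huniq⟩ := hEx
      obtain ⟨hr1, hr2⟩ := key hk hcyc hsplit ht₁ ht₂ hne hcomm hxsol.1 hxsol.2.1 hxsol.2.2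
      have h12 : t₁ * t₂ ≠ 1 := by
        intro h
        apply hcomm
        have h3 : t₂ = t₁⁻¹ := eq_inv_of_mul_eq_one_right h
        rw [h3]
        group
      have h21 : t₂ * t₁ ≠ 1 := by
        intro h
        apply hcomm
        have h3 : t₁ = t₂⁻¹ := eq_inv_of_mul_eq_one_right h
        rw [h3]
        group
      have s1 : (t₁ * t₂) ≠ 1 ∧ (cayleyGraph (Equiv.Perm (Fin n)) T).Adj t₁ (t₁ * t₂) ∧
          (cayleyGraph (Equiv.Perm (Fin n)) T).Adj t₂ (t₁ * t₂) := by
        refine ⟨h12, ⟨?_, Or.inr hr1⟩, ⟨?_, Or.inr ?_⟩⟩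
        · intro hcc
          exact ht₂1 (left_eq_mul.mp hcc)
        · intro hcc
          exact ht₁1 (right_eq_mul.mp hcc)
        · rw [mul_inv_cancel_right]
          exact ht₁
      have s2 : (t₂ * t₁) ≠ 1 ∧ (cayleyGraph (Equiv.Perm (Fin n)) T).Adj t₁ (t₂ * t₁) ∧
          (cayleyGraph (Equiv.Perm (Fin n)) T).Adj t₂ (t₂ * t₁) := by
        refine ⟨h21, ⟨?_, Or.inr ?_⟩, ⟨?_, Or.inr hr2⟩⟩
        · intro hcc
          exact ht₂1 (right_eq_mul.mp hcc)
        · rw [mul_inv_cancel_right]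
          exact ht₂
        · intro hcc
          exact ht₁1 (left_eq_mul.mp hcc)
      exact hcomm ((huniq _ s1).trans (huniq _ s2).symm)
    · intro hcomm
      exact ⟨t₁ * t₂, (commute_sol hk hcyc hsplit ht₁ ht₂ hne hcomm _).mpr rfl,
        fun y hy => (commute_sol hk hcyc hsplit ht₁ ht₂ hne hcomm y).mp hy⟩
  · intro hcomm x
    exact commute_sol hk hcyc hsplit ht₁ ht₂ hne hcomm x
end
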